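/- The frequency of the letter 1 in p equals 1/β₁² + 1/β₁⁴, and the frequency of the letter 2 in p equals 1/β₁³ + 1/β₁⁵, where β₁ is the real root of X³ - 2X² + X - 1. -/

import Mathlib

set_option maxHeartbeats 1000000

/-- The morphism h : 0 → 01, 1 → 21, 2 → 0. -/
def h : ℕ → List ℕ
  | 0 => [0, 1]
  | 1 => [2, 1]
  | _ => [0]

/-- Apply the morphism h to a finite word. -/
def hword (w : List ℕ) : List ℕ := (w.map h).flatten

/-- `p : ℕ → ℕ` is the infinite fixed point of h starting with 0:
it takes values in {0,1,2}, starts with 0, and for every n the word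
h(p 0) h(p 1) ⋯ h(p (n-1)) is a prefix of p. -/
def IsFixedPoint (p : ℕ → ℕ) : Prop :=
  (∀ n, p n < 3) ∧ p 0 = 0 ∧
  ∀ n k, k < (hword ((List.range n).map p)).length →
    (hword ((List.range n).map p)).getD k 0 = p k

/-- `w` is a (contiguous) factor of the infinite word `p`. -/
def IsFactor (w : List ℕ) (p : ℕ → ℕ) : Prop :=
  ∃ i : ℕ, w = (List.range w.length).map fun j => p (i + j)

/- ### Auxiliary machinery -/

lemma hword_cons (a : ℕ) (w : List ℕ) : hword (a :: w) = h a ++ hword w := by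
  simp [hword]

lemma hword_counts (w : List ℕ) (hw : ∀ x ∈ w, x < 3) :
    (hword w).count 0 = w.count 0 + w.count 2 ∧
    (hword w).count 1 = w.count 0 + w.count 1 ∧
    (hword w).count 2 = w.count 1 ∧
    (hword w).length = 2 * w.count 0 + 2 * w.count 1 + w.count 2 ∧
    w.count 0 + w.count 1 + w.count 2 = w.length := by
  induction w with
  | nil => simp [hword]
  | cons a w ih =>
    have ha : a < 3 := hw a (by simp)
    obtain ⟨i1, i2, i3, i4, i5⟩ := ih (fun x hx => hw x (by simp [hx]))
    rw [hword_cons]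
    interval_cases a <;>
      simp [h, List.count_cons, List.count_append, i1, i2, i3, i4, i5] <;> omega

/-- counts of letters in prefixes -/
def cnt (p : ℕ → ℕ) (a N : ℕ) : ℕ := ((List.range N).map p).count a

/-- length of the image of the prefix of length m -/
def Lp (p : ℕ → ℕ) (m : ℕ) : ℕ := (hword ((List.range m).map p)).length

lemma prefix_eq (p : ℕ → ℕ) (hp : IsFixedPoint p) (m : ℕ) :
    (List.range ((hword ((List.range m).map p)).length)).map p
      = hword ((List.range m).map p) := by
  set w := hword ((List.range m).map p) with hw
  apply List.ext_getElem
  · simp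
  · intro k h1 h2
    have := hp.2.2 m k h2
    rw [List.getD_eq_getElem w 0 h2] at this
    simp [this]

lemma mem_prefix_lt (p : ℕ → ℕ) (hp : IsFixedPoint p) (m : ℕ) :
    ∀ x ∈ (List.range m).map p, x < 3 := by
  intro x hx
  simp only [List.mem_map] at hx
  obtain ⟨j, _, rfl⟩ := hx
  exact hp.1 j

lemma cnt_succ (p : ℕ → ℕ) (a N : ℕ) :
    cnt p a (N+1) = cnt p a N + (if p N = a then 1 else 0) := by
  unfold cnt
  rw [List.range_succ, List.map_append, List.count_append]
  simp [List.count_singleton]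

lemma cnt_zero (p : ℕ → ℕ) (a : ℕ) : cnt p a 0 = 0 := by simp [cnt]

lemma cnt_sum (p : ℕ → ℕ) (hp : IsFixedPoint p) (N : ℕ) :
    cnt p 0 N + cnt p 1 N + cnt p 2 N = N := by
  have := (hword_counts ((List.range N).map p) (mem_prefix_lt p hp N)).2.2.2.2
  simpa [cnt] using this

lemma h_len (a : ℕ) : 1 ≤ (h a).length ∧ (h a).length ≤ 2 := by
  match a with
  | 0 => simp [h]
  | 1 => simp [h]
  | (n+2) => simp [h]

lemma Lp_zero (p : ℕ → ℕ) : Lp p 0 = 0 := by simp [Lp, hword]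

lemma Lp_succ (p : ℕ → ℕ) (m : ℕ) :
    Lp p (m+1) = Lp p m + (h (p m)).length := by
  simp [Lp, List.range_succ, hword]

lemma Lp_lb (p : ℕ → ℕ) (hp : IsFixedPoint p) (m : ℕ) (hm : 1 ≤ m) :
    m + 1 ≤ Lp p m := by
  induction m with
  | zero => omega
  | succ n ih =>
    rcases Nat.eq_or_lt_of_le hm with h1 | h1
    · have h2 : Lp p 1 = 2 := by
        rw [Lp_succ, Lp_zero, hp.2.1]; simp [h]
      rw [← h1]
      omega
    · have := ih (by omega)
      have := (h_len (p n)).1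
      rw [Lp_succ]; omega

lemma exists_block (p : ℕ → ℕ) (hp : IsFixedPoint p) (N : ℕ) (hN : 1 ≤ N) :
    ∃ m, m < N ∧ Lp p m ≤ N ∧ N ≤ Lp p m + 1 := by
  have hP0 : Lp p 0 ≤ N := by simp [Lp_zero]
  have hPm : Lp p (Nat.findGreatest (fun m => Lp p m ≤ N) N) ≤ N :=
    Nat.findGreatest_spec (P := fun m => Lp p m ≤ N) (Nat.zero_le N) hP0
  set m := Nat.findGreatest (fun m => Lp p m ≤ N) N with hm
  have hmN : m ≤ N := Nat.findGreatest_le N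
  have hmlt : m < N := by
    rcases Nat.eq_or_lt_of_le hmN with h1 | h1
    · exfalso
      have h2 := Lp_lb p hp N hN
      rw [h1] at hPm
      omega
    · exact h1
  refine ⟨m, hmlt, hPm, ?_⟩
  have hnot : ¬ (Lp p (m+1) ≤ N) :=
    Nat.findGreatest_is_greatest (P := fun m => Lp p m ≤ N) (n := N) (by omega) (by omega)
  have h3 := (h_len (p m)).2
  rw [Lp_succ] at hnot
  omega

lemma counts_at_L (p : ℕ → ℕ) (hp : IsFixedPoint p) (m : ℕ) :
    cnt p 0 (Lp p m) = cnt p 0 m + cnt p 2 m ∧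
    cnt p 1 (Lp p m) = cnt p 0 m + cnt p 1 m ∧
    Lp p m = 2 * cnt p 0 m + 2 * cnt p 1 m + cnt p 2 m ∧
    cnt p 0 m + cnt p 1 m + cnt p 2 m = m := by
  have hpre := prefix_eq p hp m
  obtain ⟨i1, i2, i3, i4, i5⟩ := hword_counts ((List.range m).map p) (mem_prefix_lt p hp m)
  refine ⟨?_, ?_, ?_, ?_⟩
  · show ((List.range (Lp p m)).map p).count 0 = _
    rw [show Lp p m = (hword ((List.range m).map p)).length from rfl, hpre]
    exact i1
  · show ((List.range (Lp p m)).map p).count 1 = _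
    rw [show Lp p m = (hword ((List.range m).map p)).length from rfl, hpre]
    exact i2
  · exact i4
  · simpa [cnt] using i5

/-- discrepancy -/
noncomputable def Dd (p : ℕ → ℕ) (f : ℝ) (a : ℕ) (N : ℕ) : ℝ := (cnt p a N : ℝ) - f * N

lemma step_lemma (p : ℕ → ℕ) (hp : IsFixedPoint p) (f0 f1 : ℝ)
    (hid1 : (f0 + f1) * (1 + f0) = 1)
    (hid2 : (1 - f1) * (f0 + f1) = f1)
    (hf00 : 0 ≤ f0) (hf01 : f0 ≤ 1) (hf10 : 0 ≤ f1) (hf11 : f1 ≤ 1)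
    (m N : ℕ) (h1 : Lp p m ≤ N) (h2 : N ≤ Lp p m + 1) :
    ∃ e0 e1 : ℝ, |e0| ≤ 1 ∧ |e1| ≤ 1 ∧
      Dd p f0 0 N = -(Dd p f1 1 m) - f0 * (Dd p f0 0 m + Dd p f1 1 m) + e0 ∧
      Dd p f1 1 N = (1 - f1) * (Dd p f0 0 m + Dd p f1 1 m) + e1 := by
  obtain ⟨hc0, hc1, hL, hsum⟩ := counts_at_L p hp m
  have hc0' : (cnt p 0 (Lp p m) : ℝ) = cnt p 0 m + cnt p 2 m := by exact_mod_cast hc0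
  have hc1' : (cnt p 1 (Lp p m) : ℝ) = cnt p 0 m + cnt p 1 m := by exact_mod_cast hc1
  have hL' : (Lp p m : ℝ) = 2 * cnt p 0 m + 2 * cnt p 1 m + cnt p 2 m := by exact_mod_cast hL
  have hs' : (cnt p 0 m : ℝ) + cnt p 1 m + cnt p 2 m = m := by exact_mod_cast hsum
  have hc2' : (cnt p 2 m : ℝ) = (m : ℝ) - cnt p 0 m - cnt p 1 m := by linarith
  have hb0 : Dd p f0 0 (Lp p m) = -(Dd p f1 1 m) - f0 * (Dd p f0 0 m + Dd p f1 1 m) := by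
    unfold Dd
    rw [hc0', hL', hc2']
    linear_combination (-(m : ℝ)) * hid1
  have hb1 : Dd p f1 1 (Lp p m) = (1 - f1) * (Dd p f0 0 m + Dd p f1 1 m) := by
    unfold Dd
    rw [hc1', hL', hc2']
    linear_combination ((m : ℝ)) * hid2
  rcases (by omega : N = Lp p m ∨ N = Lp p m + 1) with rfl | rfl
  · exact ⟨0, 0, by norm_num, by norm_num, by rw [hb0]; ring, by rw [hb1]; ring⟩
  · refine ⟨(if p (Lp p m) = 0 then (1:ℝ) else 0) - f0,
      (if p (Lp p m) = 1 then (1:ℝ) else 0) - f1, ?_, ?_, ?_, ?_⟩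
    · rw [abs_le]; split_ifs <;> constructor <;> linarith
    · rw [abs_le]; split_ifs <;> constructor <;> linarith
    · have hn := cnt_succ p 0 (Lp p m)
      have : Dd p f0 0 (Lp p m + 1)
          = Dd p f0 0 (Lp p m) + ((if p (Lp p m) = 0 then (1:ℝ) else 0) - f0) := by
        unfold Dd
        rw [hn]
        push_cast [apply_ite (fun n : ℕ => (n : ℝ))]
        ring
      rw [this, hb0]
    · have hn := cnt_succ p 1 (Lp p m)
      have : Dd p f1 1 (Lp p m + 1)
          = Dd p f1 1 (Lp p m) + ((if p (Lp p m) = 1 then (1:ℝ) else 0) - f1) := by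
        unfold Dd
        rw [hn]
        push_cast [apply_ite (fun n : ℕ => (n : ℝ))]
        ring
      rw [this, hb1]

lemma key_bound (k1 k2 x y e : ℝ) (hx : |x| ≤ 140) (hy : |y| ≤ 140) (he : |e| ≤ 2.7)
    (hk : |k1| + |k2| ≤ 0.975) : |k1 * x + k2 * y + e| ≤ 140 := by
  have h1 : |k1 * x + k2 * y + e| ≤ |k1| * |x| + |k2| * |y| + |e| := by
    calc |k1 * x + k2 * y + e| ≤ |k1 * x + k2 * y| + |e| := abs_add_le _ _
    _ ≤ |k1 * x| + |k2 * y| + |e| := by linarith [abs_add_le (k1 * x) (k2 * y)]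
    _ = |k1| * |x| + |k2| * |y| + |e| := by rw [abs_mul, abs_mul]
  have t1 : |k1| * |x| ≤ |k1| * 140 := mul_le_mul_of_nonneg_left hx (abs_nonneg k1)
  have t2 : |k2| * |y| ≤ |k2| * 140 := mul_le_mul_of_nonneg_left hy (abs_nonneg k2)
  nlinarith [abs_nonneg k1, abs_nonneg k2]


lemma coeff_bound0 (f0 f1 : ℝ)
    (hf0l : 0.3246 ≤ f0) (hf0u : f0 ≤ 0.3249)
    (hf1l : 0.4300 ≤ f1) (hf1u : f1 ≤ 0.4303) :
    |(-((1 - f1) + f0 * (1 - f0 - f1)))| + |(-((1 - f1) + f0 * (1 - f0 - f1)) + f0)| ≤ 0.975 := by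
  have hprodl : 0.0794 ≤ f0 * (1 - f0 - f1) := by
    nlinarith [mul_nonneg (by linarith : (0:ℝ) ≤ f0 - 0.3246)
      (by linarith : (0:ℝ) ≤ (1 - f0 - f1) - 0.2448)]
  have hprodu : f0 * (1 - f0 - f1) ≤ 0.07974 := by
    nlinarith [mul_nonneg (by linarith : (0:ℝ) ≤ 0.3249 - f0)
      (by linarith : (0:ℝ) ≤ (1 - f0 - f1) - 0.2448),
      mul_nonneg (by linarith : (0:ℝ) ≤ f0 - 0.3246)
      (by linarith : (0:ℝ) ≤ 0.2454 - (1 - f0 - f1))]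
  have hk1 : -((1 - f1) + f0 * (1 - f0 - f1)) ≤ 0 := by linarith
  have hk2 : -((1 - f1) + f0 * (1 - f0 - f1)) + f0 ≤ 0 := by linarith
  rw [abs_of_nonpos hk1, abs_of_nonpos hk2]
  linarith

lemma coeff_bound1 (f0 f1 : ℝ)
    (hf0l : 0.3246 ≤ f0) (hf0u : f0 ≤ 0.3249)
    (hf1l : 0.4300 ≤ f1) (hf1u : f1 ≤ 0.4303) :
    |((1 - f1) * (1 - f0 - f1))| + |((1 - f1) * (1 - f0 - f1) - (1 - f1))| ≤ 0.975 := by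
  have hq : 0 ≤ (1 - f1) * (1 - f0 - f1) := by
    apply mul_nonneg <;> linarith
  have hqu : (1 - f1) * (1 - f0 - f1) ≤ 0.15 := by
    nlinarith [mul_nonneg (by linarith : (0:ℝ) ≤ 1 - f1)
      (by linarith : (0:ℝ) ≤ 0.2454 - (1 - f0 - f1))]
  have hk2 : (1 - f1) * (1 - f0 - f1) - (1 - f1) ≤ 0 := by nlinarith
  rw [abs_of_nonneg hq, abs_of_nonpos hk2]
  linarith

lemma err_bound0 (f0 e01 e02 e12 : ℝ)
    (hf0l : 0.3246 ≤ f0) (hf0u : f0 ≤ 0.3249)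
    (h1 : |e01| ≤ 1) (h2 : |e02| ≤ 1) (h3 : |e12| ≤ 1) :
    |e01 - f0 * e02 - (1 + f0) * e12| ≤ 2.7 := by
  obtain ⟨h1l, h1u⟩ := abs_le.mp h1
  obtain ⟨h2l, h2u⟩ := abs_le.mp h2
  obtain ⟨h3l, h3u⟩ := abs_le.mp h3
  have hb1 : -f0 ≤ f0 * e02 := by nlinarith
  have hb2 : f0 * e02 ≤ f0 := by nlinarith
  have hb3 : -(1 + f0) ≤ (1 + f0) * e12 := by nlinarith
  have hb4 : (1 + f0) * e12 ≤ 1 + f0 := by nlinarith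
  rw [abs_le]; constructor <;> linarith

lemma err_bound1 (f1 e11 e02 e12 : ℝ)
    (hf1l : 0.4300 ≤ f1) (hf1u : f1 ≤ 0.4303)
    (h1 : |e11| ≤ 1) (h2 : |e02| ≤ 1) (h3 : |e12| ≤ 1) :
    |e11 + (1 - f1) * (e02 + e12)| ≤ 2.7 := by
  obtain ⟨h1l, h1u⟩ := abs_le.mp h1
  obtain ⟨h2l, h2u⟩ := abs_le.mp h2
  obtain ⟨h3l, h3u⟩ := abs_le.mp h3
  have hb1 : -(2 * (1 - f1)) ≤ (1 - f1) * (e02 + e12) := by nlinarith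
  have hb2 : (1 - f1) * (e02 + e12) ≤ 2 * (1 - f1) := by nlinarith
  rw [abs_le]; constructor <;> linarith

lemma main_bound (p : ℕ → ℕ) (hp : IsFixedPoint p) (f0 f1 : ℝ)
    (hid1 : (f0 + f1) * (1 + f0) = 1)
    (hid2 : (1 - f1) * (f0 + f1) = f1)
    (hf0l : 0.3246 ≤ f0) (hf0u : f0 ≤ 0.3249)
    (hf1l : 0.4300 ≤ f1) (hf1u : f1 ≤ 0.4303) :
    ∀ N, |Dd p f0 0 N| ≤ 140 ∧ |Dd p f1 1 N| ≤ 140 := by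
  have hf00 : (0:ℝ) ≤ f0 := by linarith
  have hf01 : f0 ≤ 1 := by linarith
  have hf10 : (0:ℝ) ≤ f1 := by linarith
  have hf11 : f1 ≤ 1 := by linarith
  intro N
  induction N using Nat.strong_induction_on with
  | _ N ih =>
    rcases Nat.eq_zero_or_pos N with rfl | hN
    · constructor <;> simp [Dd, cnt_zero]
    · obtain ⟨m1, hm1N, h1a, h1b⟩ := exists_block p hp N hN
      obtain ⟨e01, e11, he01, he11, hD0N, hD1N⟩ :=
        step_lemma p hp f0 f1 hid1 hid2 hf00 hf01 hf10 hf11 m1 N h1a h1b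
      rcases Nat.eq_zero_or_pos m1 with rfl | hm1pos
      · have hz0 : Dd p f0 0 0 = 0 := by simp [Dd, cnt_zero]
        have hz1 : Dd p f1 1 0 = 0 := by simp [Dd, cnt_zero]
        rw [hz0, hz1] at hD0N hD1N
        have h0 : Dd p f0 0 N = e01 := by rw [hD0N]; ring
        have h1 : Dd p f1 1 N = e11 := by rw [hD1N]; ring
        rw [h0, h1]
        exact ⟨le_trans he01 (by norm_num), le_trans he11 (by norm_num)⟩
      · obtain ⟨m2, hm21, h2a, h2b⟩ := exists_block p hp m1 hm1pos
        obtain ⟨e02, e12, he02, he12, hD0m, hD1m⟩ :=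
          step_lemma p hp f0 f1 hid1 hid2 hf00 hf01 hf10 hf11 m2 m1 h2a h2b
        obtain ⟨hx, hy⟩ := ih m2 (lt_trans hm21 hm1N)
        set x := Dd p f0 0 m2 with hxdef
        set y := Dd p f1 1 m2 with hydef
        have hform0 : Dd p f0 0 N =
            (-((1 - f1) + f0 * (1 - f0 - f1))) * x
            + (-((1 - f1) + f0 * (1 - f0 - f1)) + f0) * y
            + (e01 - f0 * e02 - (1 + f0) * e12) := by
          rw [hD0N, hD0m, hD1m]; ring
        have hform1 : Dd p f1 1 N =
            ((1 - f1) * (1 - f0 - f1)) * x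
            + ((1 - f1) * (1 - f0 - f1) - (1 - f1)) * y
            + (e11 + (1 - f1) * (e02 + e12)) := by
          rw [hD1N, hD0m, hD1m]; ring
        constructor
        · rw [hform0]
          apply key_bound _ _ _ _ _ hx hy
          · exact err_bound0 f0 e01 e02 e12 hf0l hf0u he01 he02 he12
          · exact coeff_bound0 f0 f1 hf0l hf0u hf1l hf1u
        · rw [hform1]
          apply key_bound _ _ _ _ _ hx hy
          · exact err_bound1 f1 e11 e02 e12 hf1l hf1u he11 he02 he12
          · exact coeff_bound1 f0 f1 hf0l hf0u hf1l hf1u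


open Filter

theorem stmt14 (p : ℕ → ℕ) (hp : IsFixedPoint p) (β₁ : ℝ)
    (hroot : β₁^3 - 2*β₁^2 + β₁ - 1 = 0)
    (huniq : ∀ x : ℝ, x^3 - 2*x^2 + x - 1 = 0 → x = β₁) :
    Filter.Tendsto
      (fun N : ℕ => (((List.range N).map p).count 1 : ℝ) / N)
      Filter.atTop (nhds (1 / β₁^2 + 1 / β₁^4)) ∧
    Filter.Tendsto
      (fun N : ℕ => (((List.range N).map p).count 2 : ℝ) / N)
      Filter.atTop (nhds (1 / β₁^3 + 1 / β₁^5)) := by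
  have hb : 1.7548 < β₁ ∧ β₁ < 1.7549 := by
    have hcont : ContinuousOn (fun x : ℝ => x^3 - 2*x^2 + x - 1) (Set.Icc 1.7548 1.7549) :=
      (Continuous.continuousOn (((((continuous_pow 3).sub
        (continuous_const.mul (continuous_pow 2))).add continuous_id).sub continuous_const)))
    have hsub := intermediate_value_Icc (by norm_num : (1.7548:ℝ) ≤ 1.7549) hcont
    have h0 : (0:ℝ) ∈ Set.Icc ((1.7548:ℝ)^3 - 2*1.7548^2 + 1.7548 - 1)
        ((1.7549:ℝ)^3 - 2*1.7549^2 + 1.7549 - 1) := by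
      constructor <;> norm_num
    obtain ⟨x, hx, hfx⟩ := hsub h0
    have := huniq x hfx
    subst this
    constructor
    · rcases eq_or_lt_of_le hx.1 with h1 | h1
      · exfalso; rw [← h1] at hroot; norm_num at hroot
      · exact h1
    · rcases eq_or_lt_of_le hx.2 with h1 | h1
      · exfalso; rw [h1] at hroot; norm_num at hroot
      · exact h1
  obtain ⟨hbl, hbu⟩ := hb
  have hb0 : (0:ℝ) < β₁ := by linarith
  have hb2 : (0:ℝ) < β₁^2 + 1 := by positivity
  set f1 : ℝ := β₁ / (β₁^2 + 1) with hf1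
  set f0 : ℝ := (β₁ - 1) * f1 with hf0
  have hid1 : (f0 + f1) * (1 + f0) = 1 := by
    rw [hf0, hf1]
    field_simp
    ring_nf
    nlinarith [hroot, sq_nonneg β₁]
  have hid2 : (1 - f1) * (f0 + f1) = f1 := by
    rw [hf0, hf1]
    field_simp
    ring_nf
    nlinarith [hroot, sq_nonneg β₁]
  have hf1b : 0.4300 < f1 ∧ f1 < 0.4303 := by
    rw [hf1]
    constructor
    · rw [lt_div_iff₀ hb2]; nlinarith
    · rw [div_lt_iff₀ hb2]; nlinarith
  have hf0b : 0.3246 < f0 ∧ f0 < 0.3249 := by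
    rw [hf0]
    constructor <;> nlinarith [hf1b.1, hf1b.2]
  have htgt1 : 1 / β₁^2 + 1 / β₁^4 = f1 := by
    rw [hf1]
    field_simp
    linear_combination (-β₁^2 - β₁ - 1) * hroot
  have htgt2 : 1 / β₁^3 + 1 / β₁^5 = 1 - f0 - f1 := by
    rw [hf0, hf1]
    field_simp
    linear_combination (-β₁^2 - β₁ - 1) * hroot
  have hmb := main_bound p hp f0 f1 hid1 hid2
    (le_of_lt hf0b.1) (le_of_lt hf0b.2) (le_of_lt hf1b.1) (le_of_lt hf1b.2)
  have hDdiv : ∀ (f : ℝ) (a : ℕ), (∀ N, |Dd p f a N| ≤ 140) →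
      Tendsto (fun N : ℕ => Dd p f a N / N) atTop (nhds 0) := by
    intro f a hbd
    apply squeeze_zero_norm (fun n => ?_) (tendsto_const_div_atTop_nhds_zero_nat 140)
    rcases Nat.eq_zero_or_pos n with rfl | hn
    · simp
    · have hn' : (0:ℝ) < n := by exact_mod_cast hn
      rw [Real.norm_eq_abs, abs_div, abs_of_pos hn']
      gcongr
      exact hbd n
  have hc0tend : Tendsto (fun N : ℕ => (cnt p 0 N : ℝ) / N) atTop (nhds f0) := by
    have h := (hDdiv f0 0 (fun N => (hmb N).1)).const_add f0
    rw [add_zero] at h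
    apply h.congr'
    filter_upwards [eventually_ge_atTop 1] with N hN
    have hNne : (N:ℝ) ≠ 0 := by positivity
    unfold Dd
    field_simp
    ring
  have hc1tend : Tendsto (fun N : ℕ => (cnt p 1 N : ℝ) / N) atTop (nhds f1) := by
    have h := (hDdiv f1 1 (fun N => (hmb N).2)).const_add f1
    rw [add_zero] at h
    apply h.congr'
    filter_upwards [eventually_ge_atTop 1] with N hN
    have hNne : (N:ℝ) ≠ 0 := by positivity
    unfold Dd
    field_simp
    ring
  constructor
  · rw [htgt1]
    exact hc1tend
  · rw [htgt2]
    have h2 : Tendsto (fun N : ℕ => 1 - (cnt p 0 N : ℝ)/N - (cnt p 1 N : ℝ)/N)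
        atTop (nhds (1 - f0 - f1)) := (tendsto_const_nhds.sub hc0tend).sub hc1tend
    apply h2.congr'
    filter_upwards [eventually_ge_atTop 1] with N hN
    have hNpos : (0:ℝ) < N := by exact_mod_cast hN
    have hs : (cnt p 0 N : ℝ) + cnt p 1 N + cnt p 2 N = N := by
      exact_mod_cast cnt_sum p hp N
    show 1 - (cnt p 0 N : ℝ)/N - (cnt p 1 N : ℝ)/N = (cnt p 2 N : ℝ) / N
    field_simp
    linarith
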